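/- (Greene) Let d ≥ 1 and let P₁,…,Pₙ be points in ℝᵈ whose affine span is all of ℝᵈ. Then there exists an injective map ι from the set of distinct points {P₁,…,Pₙ} (equivalently, from 𝓕₁) to the set 𝓕_d of hyperplanes determined by the points (flats of rank d, i.e. of dimension d − 1) such that each point lies on its assigned hyperplane. -/

import Mathlib

noncomputable section
open Module

namespace Greene

variable {E : Type*} [AddCommGroup E] [Module ℝ E] [FiniteDimensional ℝ E] [DecidableEq E]

set_option linter.unusedSectionVars false

attribute [local instance] Classical.propDecidable

/-- affine dimension (finrank of direction) -/
def adim (W : AffineSubspace ℝ E) : ℕ := Module.finrank ℝ W.direction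

/-- span of a finset -/
def sp (T : Finset E) : AffineSubspace ℝ E := affineSpan ℝ (T : Set E)

lemma sp_mono {T T' : Finset E} (h : T ⊆ T') : sp T ≤ sp T' :=
  affineSpan_mono ℝ (by exact_mod_cast h)

lemma mem_sp {T : Finset E} {x : E} (hx : x ∈ T) : x ∈ sp T :=
  mem_affineSpan ℝ (by exact_mod_cast hx)

lemma sp_nonempty {T : Finset E} (h : T.Nonempty) : ((sp T : AffineSubspace ℝ E) : Set E).Nonempty :=
  ⟨h.choose, mem_sp h.choose_spec⟩

lemma adim_mono {W W' : AffineSubspace ℝ E} (h : W ≤ W') : adim W ≤ adim W' :=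
  Submodule.finrank_mono (AffineSubspace.direction_le h)

lemma eq_of_le_of_adim_le {W W' : AffineSubspace ℝ E} (h : W ≤ W')
    (hne : (W : Set E).Nonempty) (hd : adim W' ≤ adim W) : W = W' := by
  obtain ⟨x, hx⟩ := hne
  have hdir : W.direction = W'.direction :=
    Submodule.eq_of_le_of_finrank_le (AffineSubspace.direction_le h) hd
  exact (AffineSubspace.eq_iff_direction_eq_of_mem hx (h hx)).2 hdir

lemma adim_lt_of_lt {W W' : AffineSubspace ℝ E} (h : W < W')
    (hne : (W : Set E).Nonempty) : adim W < adim W' := by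
  rcases lt_or_ge (adim W) (adim W') with h' | h'
  · exact h'
  · exact absurd (eq_of_le_of_adim_le h.le hne h') h.ne

lemma sp_insert_eq (p : E) (T : Finset E) :
    sp (insert p T) = affineSpan ℝ (insert p ((sp T : AffineSubspace ℝ E) : Set E)) := by
  unfold sp
  rw [Finset.coe_insert, ← affineSpan_insert_affineSpan]

lemma direction_sp_insert {T : Finset E} {x : E} (hx : x ∈ sp T) (p : E) :
    (sp (insert p T)).direction = Submodule.span ℝ {p -ᵥ x} ⊔ (sp T).direction := by
  rw [sp_insert_eq, AffineSubspace.direction_affineSpan_insert hx]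

lemma mem_sp_insert_iff {T : Finset E} {x : E} (hx : x ∈ sp T) (p q : E) :
    q ∈ sp (insert p T) ↔ ∃ r : ℝ, ∃ p0 ∈ sp T, q = r • (p -ᵥ x) +ᵥ p0 := by
  rw [sp_insert_eq, AffineSubspace.mem_affineSpan_insert_iff hx]

lemma adim_insert_le {T : Finset E} {x : E} (hx : x ∈ sp T) (p : E) :
    adim (sp (insert p T)) ≤ adim (sp T) + 1 := by
  have h := direction_sp_insert hx p
  have h2 : Module.finrank ℝ ↥(Submodule.span ℝ ({p -ᵥ x} : Set E) ⊔ (sp T).direction) ≤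
      Module.finrank ℝ ↥(Submodule.span ℝ ({p -ᵥ x} : Set E)) + finrank ℝ (sp T).direction := by
    have := Submodule.finrank_sup_add_finrank_inf_eq
      (Submodule.span ℝ ({p -ᵥ x} : Set E)) (sp T).direction
    omega
  have h3 : Module.finrank ℝ ↥(Submodule.span ℝ ({p -ᵥ x} : Set E)) ≤ 1 :=
    finrank_span_le_card _ |>.trans (by simp)
  unfold adim
  rw [h]
  omega

lemma adim_insert {T : Finset E} {x : E} (hx : x ∈ sp T) {p : E} (hp : p ∉ sp T) :
    adim (sp (insert p T)) = adim (sp T) + 1 := by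
  refine le_antisymm (adim_insert_le hx p) ?_
  have hlt : sp T < sp (insert p T) := by
    refine lt_of_le_of_ne (sp_mono (Finset.subset_insert _ _)) ?_
    intro hEq
    exact hp (hEq ▸ mem_sp (Finset.mem_insert_self p T))
  exact adim_lt_of_lt hlt ⟨x, hx⟩

/-- exchange property -/
lemma exchange {T : Finset E} {x : E} (hx : x ∈ sp T) {p s : E}
    (hps : p ∈ sp (insert s T)) (hp : p ∉ sp T) : s ∈ sp (insert p T) := by
  obtain ⟨r, p0, hp0, hq⟩ := (mem_sp_insert_iff hx s p).1 hps
  have hr : r ≠ 0 := by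
    rintro rfl
    simp at hq
    exact hp (hq ▸ hp0)
  rw [mem_sp_insert_iff hx p s]
  refine ⟨r⁻¹, (-r⁻¹) • (p0 -ᵥ x) +ᵥ x, ?_, ?_⟩
  · exact AffineSubspace.smul_vsub_vadd_mem _ _ hp0 hx hx
  · rw [hq]
    simp only [vsub_eq_sub, vadd_eq_add]
    match_scalars <;> (field_simp; try ring)

lemma sp_le_of_forall {S : Finset E} {W : AffineSubspace ℝ E} (h : ∀ s ∈ S, s ∈ W) :
    sp S ≤ W :=
  affineSpan_le.2 (fun x hx => h x (by exact_mod_cast hx))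

lemma adim_sp_singleton (a : E) : adim (sp ({a} : Finset E)) = 0 := by
  unfold adim sp
  rw [direction_affineSpan]
  simp [vectorSpan_singleton]

lemma eq_of_adim_eq_zero {T : Finset E} (h0 : adim (sp T) = 0) {y z : E}
    (hy : y ∈ sp T) (hz : z ∈ sp T) : y = z := by
  have : (sp T).direction = ⊥ := Submodule.finrank_eq_zero.1 h0
  have hv : y -ᵥ z ∈ (sp T).direction := AffineSubspace.vsub_mem_direction hy hz
  rw [this, Submodule.mem_bot] at hv
  simpa [vsub_eq_sub, sub_eq_zero] using hv

lemma sp_singleton_mem_iff {a y : E} : y ∈ sp ({a} : Finset E) ↔ y = a := by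
  unfold sp
  rw [Finset.coe_singleton, ← AffineSubspace.mem_coe, AffineSubspace.coe_affineSpan_singleton]
  simp

lemma exists_outside {S T : Finset E} (hT : T ⊆ S) (h : adim (sp T) < adim (sp S)) :
    ∃ s ∈ S, s ∉ sp T := by
  by_contra hc
  push_neg at hc
  exact absurd (adim_mono (sp_le_of_forall hc)) (by omega)

lemma grow_aux (S : Finset E) : ∀ (n : ℕ) (T : Finset E), T ⊆ S → T.Nonempty →
    adim (sp T) + n ≤ adim (sp S) →
    ∃ T', T ⊆ T' ∧ T' ⊆ S ∧ T'.Nonempty ∧ adim (sp T') = adim (sp T) + n := by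
  intro n
  induction n with
  | zero => exact fun T hTS hTne _ => ⟨T, subset_rfl, hTS, hTne, by omega⟩
  | succ n ih =>
    intro T hTS hTne hle
    obtain ⟨s, hsS, hs⟩ := exists_outside hTS (by omega)
    obtain ⟨x, hx⟩ := sp_nonempty hTne
    have hins : adim (sp (insert s T)) = adim (sp T) + 1 := adim_insert hx hs
    obtain ⟨T', h1, h2, h3, h4⟩ := ih (insert s T) (Finset.insert_subset hsS hTS)
      (Finset.insert_nonempty _ _) (by omega)
    exact ⟨T', (Finset.subset_insert _ _).trans h1, h2, h3, by omega⟩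

lemma grow_avoid_aux (S : Finset E) (p : E) : ∀ (n : ℕ) (T : Finset E), T ⊆ S → T.Nonempty →
    p ∉ sp T → adim (sp T) + n + 1 ≤ adim (sp S) →
    ∃ T', T ⊆ T' ∧ T' ⊆ S ∧ T'.Nonempty ∧ adim (sp T') = adim (sp T) + n ∧ p ∉ sp T' := by
  intro n
  induction n with
  | zero => exact fun T hTS hTne hp _ => ⟨T, subset_rfl, hTS, hTne, by omega, hp⟩
  | succ n ih =>
    intro T hTS hTne hp hle
    obtain ⟨x, hx⟩ := sp_nonempty hTne
    have : ∃ s ∈ S, s ∉ sp T ∧ p ∉ sp (insert s T) := by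
      by_contra hc
      push_neg at hc
      have hall : ∀ s ∈ S, s ∈ sp (insert p T) := by
        intro s hsS
        rcases Classical.em (s ∈ sp T) with h | h
        · exact sp_mono (Finset.subset_insert _ _) h
        · exact exchange hx (hc s hsS h) hp
      have h1 : adim (sp S) ≤ adim (sp (insert p T)) := adim_mono (sp_le_of_forall hall)
      have h2 : adim (sp (insert p T)) = adim (sp T) + 1 := adim_insert hx hp
      omega
    obtain ⟨s, hsS, hs, hps⟩ := this
    have hins : adim (sp (insert s T)) = adim (sp T) + 1 := adim_insert hx hs
    obtain ⟨T', h1, h2, h3, h4, h5⟩ := ih (insert s T) (Finset.insert_subset hsS hTS)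
      (Finset.insert_nonempty _ _) hps (by omega)
    exact ⟨T', (Finset.subset_insert _ _).trans h1, h2, h3, by omega, h5⟩

/-- The copoints (hyperplane-flats) of the configuration `S`. -/
def Cops (S : Finset E) : Finset (AffineSubspace ℝ E) :=
  ((S.powerset.filter Finset.Nonempty).image (fun T => sp T)).filter
    (fun W => adim W + 1 = adim (sp S))

lemma mem_Cops {S : Finset E} {W : AffineSubspace ℝ E} :
    W ∈ Cops S ↔ (∃ T, T ⊆ S ∧ T.Nonempty ∧ W = sp T) ∧ adim W + 1 = adim (sp S) := by
  unfold Cops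
  simp only [Finset.mem_filter, Finset.mem_image, Finset.mem_powerset]
  constructor
  · rintro ⟨⟨T, ⟨hTS, hTne⟩, rfl⟩, h⟩
    exact ⟨⟨T, hTS, hTne, rfl⟩, h⟩
  · rintro ⟨⟨T, hTS, hTne, rfl⟩, h⟩
    exact ⟨⟨T, ⟨hTS, hTne⟩, rfl⟩, h⟩

lemma Cops_nonempty_flat {S : Finset E} {W : AffineSubspace ℝ E} (h : W ∈ Cops S) :
    ((W : AffineSubspace ℝ E) : Set E).Nonempty := by
  obtain ⟨⟨T, _, hTne, rfl⟩, _⟩ := mem_Cops.1 h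
  exact sp_nonempty hTne

lemma Cops_le {S : Finset E} {W : AffineSubspace ℝ E} (h : W ∈ Cops S) : W ≤ sp S := by
  obtain ⟨⟨T, hTS, _, rfl⟩, _⟩ := mem_Cops.1 h
  exact sp_mono hTS

lemma Cops_exists_mem {S : Finset E} {W : AffineSubspace ℝ E} (h : W ∈ Cops S) :
    ∃ a ∈ S, a ∈ W := by
  obtain ⟨⟨T, hTS, hTne, rfl⟩, _⟩ := mem_Cops.1 h
  exact ⟨hTne.choose, hTS hTne.choose_spec, mem_sp hTne.choose_spec⟩

/-- a copoint misses some point of `S` -/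
lemma Cops_misses {S : Finset E} {W : AffineSubspace ℝ E} (h : W ∈ Cops S) :
    ∃ a ∈ S, a ∉ W := by
  by_contra hc
  push_neg at hc
  have h1 : adim (sp S) ≤ adim W := adim_mono (sp_le_of_forall hc)
  obtain ⟨_, h2⟩ := mem_Cops.1 h
  omega

/-- every point of `S` lies on some copoint (when `dim ≥ 1`) -/
lemma exists_Cops_mem {S : Finset E} (hS : 1 ≤ adim (sp S)) {p : E} (hp : p ∈ S) :
    ∃ W ∈ Cops S, p ∈ W := by
  obtain ⟨T', h1, h2, h3, h4⟩ := grow_aux S (adim (sp S) - 1) {p} (by simpa using hp)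
    (Finset.singleton_nonempty _) (by rw [adim_sp_singleton]; omega)
  refine ⟨sp T', mem_Cops.2 ⟨⟨T', h2, h3, rfl⟩, by rw [h4, adim_sp_singleton]; omega⟩, ?_⟩
  exact mem_sp (h1 (Finset.mem_singleton_self p))

/-- every point of `S` is off some copoint (when `dim ≥ 1`) -/
lemma exists_Cops_not_mem {S : Finset E} (hS : 1 ≤ adim (sp S)) {p : E} (hp : p ∈ S) :
    ∃ W ∈ Cops S, p ∉ W := by
  -- find q ∈ S with q ∉ sp {p}
  obtain ⟨q, hqS, hq⟩ := exists_outside (Finset.singleton_subset_iff.2 hp)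
    (by rw [adim_sp_singleton]; omega)
  have hpq : p ∉ sp ({q} : Finset E) := by
    rw [sp_singleton_mem_iff]
    rintro rfl
    exact hq (mem_sp (Finset.mem_singleton_self p))
  obtain ⟨T', h1, h2, h3, h4, h5⟩ := grow_avoid_aux S p (adim (sp S) - 1) {q}
    (Finset.singleton_subset_iff.2 hqS) (Finset.singleton_nonempty _) hpq
    (by rw [adim_sp_singleton]; omega)
  exact ⟨sp T', mem_Cops.2 ⟨⟨T', h2, h3, rfl⟩, by rw [h4, adim_sp_singleton]; omega⟩, h5⟩



/-- Abstract Motzkin/Conway double-counting lemma. -/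
lemma motzkin {α β : Type*} (X : Finset α) (Y : Finset β) (R : α → β → Prop)
    (h1 : ∀ H ∈ Y, ∃ p ∈ X, ¬ R p H)
    (h2 : ∀ p ∈ X, ∃ H ∈ Y, ¬ R p H)
    (h4 : ∀ p ∈ X, ∃ H ∈ Y, R p H)
    (h3 : ∀ p ∈ X, ∀ H ∈ Y, ¬ R p H →
      (X.filter (fun q => R q H)).card ≤ (Y.filter (fun K => R p K)).card) :
    X.card ≤ Y.card := by
  rcases X.eq_empty_or_nonempty with rfl | hXne
  · simp
  by_contra hlt
  push_neg at hlt
  set m := X.card with hm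
  set c := Y.card with hc
  set pts : β → ℕ := fun H => (X.filter (fun q => R q H)).card with hpts
  set cop : α → ℕ := fun p => (Y.filter (fun K => R p K)).card with hcop
  have hptslt : ∀ H ∈ Y, pts H < m := by
    intro H hH
    obtain ⟨p, hpX, hpR⟩ := h1 H hH
    apply Finset.card_lt_card
    exact ⟨Finset.filter_subset _ _, fun hsub => hpR (Finset.mem_filter.1 (hsub hpX)).2⟩
  have hcoplt : ∀ p ∈ X, cop p < c := by
    intro p hp
    obtain ⟨H, hHY, hHR⟩ := h2 p hp
    apply Finset.card_lt_card
    exact ⟨Finset.filter_subset _ _, fun hsub => hHR (Finset.mem_filter.1 (hsub hHY)).2⟩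
  have hcop1 : ∀ p ∈ X, 1 ≤ cop p := by
    intro p hp
    obtain ⟨H, hHY, hHR⟩ := h4 p hp
    exact Finset.card_pos.2 ⟨H, Finset.mem_filter.2 ⟨hHY, hHR⟩⟩
  have hc0 : 0 < c := by
    obtain ⟨p, hp⟩ := hXne
    obtain ⟨H, hH, _⟩ := h2 p hp
    exact Finset.card_pos.2 ⟨H, hH⟩
  have hm0 : 0 < m := Finset.card_pos.2 hXne
  set NI : Finset (α × β) := (X ×ˢ Y).filter (fun z => ¬ R z.1 z.2) with hNI
  have hNIne : NI.Nonempty := by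
    obtain ⟨p, hp⟩ := hXne
    obtain ⟨H, hH, hR⟩ := h2 p hp
    exact ⟨(p, H), Finset.mem_filter.2 ⟨Finset.mem_product.2 ⟨hp, hH⟩, hR⟩⟩
  set w : β → ℚ := fun H => 1 / ((c : ℚ) * ((m : ℚ) - (pts H : ℚ))) with hw
  set u : α → ℚ := fun p => 1 / ((m : ℚ) * ((c : ℚ) - (cop p : ℚ))) with hu
  have hA : ∑ z ∈ NI, w z.2 = 1 := by
    rw [hNI, Finset.sum_filter, Finset.sum_product, Finset.sum_comm]
    have : ∀ H ∈ Y, (∑ p ∈ X, if ¬ R p H then w H else 0) = 1 / (c : ℚ) := by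
      intro H hH
      rw [← Finset.sum_filter, Finset.sum_const, nsmul_eq_mul]
      have hcard : ((X.filter (fun p => ¬ R p H)).card : ℚ) = (m : ℚ) - (pts H : ℚ) := by
        have := Finset.card_filter_add_card_filter_not (s := X)
          (p := fun q => R q H)
        have h' : pts H + (X.filter (fun p => ¬ R p H)).card = m := this
        push_cast [← h']
        ring
      rw [hcard, hw]
      have hne : (m : ℚ) - (pts H : ℚ) ≠ 0 := by
        have := hptslt H hH
        have : (pts H : ℚ) < (m : ℚ) := by exact_mod_cast this
        linarith
      field_simp
    rw [Finset.sum_congr rfl this, Finset.sum_const, nsmul_eq_mul]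
    field_simp
    exact_mod_cast hc.symm
  have hB : ∑ z ∈ NI, u z.1 = 1 := by
    rw [hNI, Finset.sum_filter, Finset.sum_product]
    have : ∀ p ∈ X, (∑ H ∈ Y, if ¬ R p H then u p else 0) = 1 / (m : ℚ) := by
      intro p hp
      rw [← Finset.sum_filter, Finset.sum_const, nsmul_eq_mul]
      have hcard : ((Y.filter (fun H => ¬ R p H)).card : ℚ) = (c : ℚ) - (cop p : ℚ) := by
        have := Finset.card_filter_add_card_filter_not (s := Y)
          (p := fun K => R p K)
        have h' : cop p + (Y.filter (fun H => ¬ R p H)).card = c := this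
        push_cast [← h']
        ring
      rw [hcard, hu]
      have hne : (c : ℚ) - (cop p : ℚ) ≠ 0 := by
        have := hcoplt p hp
        have : (cop p : ℚ) < (c : ℚ) := by exact_mod_cast this
        linarith
      field_simp
    rw [Finset.sum_congr rfl this, Finset.sum_const, nsmul_eq_mul]
    field_simp
    exact_mod_cast hm.symm
  have hAB : ∑ z ∈ NI, w z.2 < ∑ z ∈ NI, u z.1 := by
    apply Finset.sum_lt_sum_of_nonempty hNIne
    rintro ⟨p, H⟩ hz
    obtain ⟨hzX, hzR⟩ := Finset.mem_filter.1 hz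
    obtain ⟨hpX, hHY⟩ := Finset.mem_product.1 hzX
    have e1 : pts H ≤ cop p := h3 p hpX H hHY hzR
    have e2 : 1 ≤ cop p := hcop1 p hpX
    have e3 : pts H < m := hptslt H hHY
    have e4 : cop p < c := hcoplt p hpX
    have q1 : ((pts H : ℚ)) < (m : ℚ) := by exact_mod_cast e3
    have q2 : ((cop p : ℚ)) < (c : ℚ) := by exact_mod_cast e4
    have q3 : ((pts H : ℚ)) ≤ (cop p : ℚ) := by exact_mod_cast e1
    have q4 : (1:ℚ) ≤ (cop p : ℚ) := by exact_mod_cast e2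
    have q5 : ((c:ℚ)) < (m : ℚ) := by exact_mod_cast hlt
    have qc : (0:ℚ) < (c:ℚ) := by exact_mod_cast hc0
    have qm : (0:ℚ) < (m:ℚ) := by exact_mod_cast hm0
    have d1 : (0:ℚ) < (c : ℚ) * ((m : ℚ) - (pts H : ℚ)) := mul_pos qc (by linarith)
    have d2 : (0:ℚ) < (m : ℚ) * ((c : ℚ) - (cop p : ℚ)) := mul_pos qm (by linarith)
    rw [hw, hu, div_lt_div_iff₀ d1 d2]
    nlinarith [q1, q2, q3, q4, q5, qc, qm]
  rw [hA, hB] at hAB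
  exact lt_irrefl _ hAB



/-- The statement `M k`: every configuration of affine dimension `k` admits an injective
matching of its points to copoints through them. -/
def Mstmt (E : Type*) [AddCommGroup E] [Module ℝ E] [FiniteDimensional ℝ E] [DecidableEq E]
    (k : ℕ) : Prop :=
  ∀ S : Finset E, S.Nonempty → adim (sp S) = k →
    ∃ f : E → AffineSubspace ℝ E, Set.InjOn f ↑S ∧ ∀ p ∈ S, f p ∈ Cops S ∧ p ∈ f p

lemma sp_filter_mem {S : Finset E} {H : AffineSubspace ℝ E} (hH : H ∈ Cops S) :
    sp (S.filter (fun q => q ∈ H)) = H := by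
  obtain ⟨⟨T, hTS, hTne, rfl⟩, _⟩ := mem_Cops.1 hH
  refine le_antisymm (sp_le_of_forall fun q hq => (Finset.mem_filter.1 hq).2) (sp_mono ?_)
  exact fun t ht => Finset.mem_filter.2 ⟨hTS ht, mem_sp ht⟩

/-- The incidence lemma: if `p ∉ H` then there are at least as many copoints through `p`
as points on `H`. -/
lemma incidence {k : ℕ} (hk : 1 ≤ k) (IH : ∀ j, 1 ≤ j → j < k → Mstmt E j)
    {S : Finset E} (hdim : adim (sp S) = k)
    {p : E} (hp : p ∈ S) {H : AffineSubspace ℝ E} (hH : H ∈ Cops S) (hpH : p ∉ H) :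
    (S.filter (fun q => q ∈ H)).card ≤ ((Cops S).filter (fun K => p ∈ K)).card := by
  set B := S.filter (fun q => q ∈ H) with hB
  have hspB : sp B = H := sp_filter_mem hH
  have hadimH : adim H + 1 = k := by
    obtain ⟨_, h⟩ := mem_Cops.1 hH
    omega
  have hBne : B.Nonempty := by
    obtain ⟨a, haS, haH⟩ := Cops_exists_mem hH
    exact ⟨a, Finset.mem_filter.2 ⟨haS, haH⟩⟩
  rcases Nat.lt_or_ge k 2 with hk2 | hk2
  · -- k = 1 : H is a single point, and some copoint passes through p
    have hk1 : k = 1 := by omega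
    have h0 : adim (sp B) = 0 := by rw [hspB]; omega
    have hB1 : B.card ≤ 1 := by
      refine Finset.card_le_one.2 fun a ha b hb => ?_
      exact eq_of_adim_eq_zero h0 (mem_sp ha) (mem_sp hb)
    obtain ⟨W, hW, hpW⟩ := exists_Cops_mem (by omega) hp
    have : 1 ≤ ((Cops S).filter (fun K => p ∈ K)).card :=
      Finset.card_pos.2 ⟨W, Finset.mem_filter.2 ⟨hW, hpW⟩⟩
    omega
  · -- k ≥ 2 : use the matching on the configuration B spanning H
    have hdimB : adim (sp B) = k - 1 := by rw [hspB]; omega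
    obtain ⟨f, hfinj, hf⟩ := IH (k-1) (by omega) (by omega) B hBne hdimB
    set G : E → AffineSubspace ℝ E :=
      fun q => affineSpan ℝ (insert p ((f q : AffineSubspace ℝ E) : Set E)) with hG
    have key : ∀ q ∈ B, G q ∈ Cops S ∧ p ∈ G q ∧ G q ⊓ H = f q := by
      intro q hq
      obtain ⟨hfq, hqfq⟩ := hf q hq
      obtain ⟨⟨T, hTB, hTne, hrep⟩, had⟩ := mem_Cops.1 hfq
      have hGq : G q = sp (insert p T) := by rw [hG]; simp only; rw [hrep, sp_insert_eq]
      have hfqH : f q ≤ H := by rw [hrep, ← hspB]; exact sp_mono hTB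
      have hpfq : p ∉ sp T := fun hc => hpH (hfqH (hrep ▸ hc))
      obtain ⟨x, hx⟩ := sp_nonempty hTne
      have hadG : adim (G q) = adim (f q) + 1 := by
        rw [hGq, adim_insert hx hpfq, hrep]
      have hGCops : G q ∈ Cops S := by
        refine mem_Cops.2 ⟨⟨insert p T, ?_, Finset.insert_nonempty _ _, hGq⟩, ?_⟩
        · exact Finset.insert_subset hp (hTB.trans (Finset.filter_subset _ _))
        · rw [hadG]
          omega
      have hpG : p ∈ G q := by rw [hGq]; exact mem_sp (Finset.mem_insert_self _ _)
      have hfqG : f q ≤ G q := by rw [hrep, hGq]; exact sp_mono (Finset.subset_insert _ _)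
      have hfqne : ((f q : AffineSubspace ℝ E) : Set E).Nonempty := ⟨q, hqfq⟩
      have hinf : G q ⊓ H = f q := by
        refine le_antisymm ?_ (le_inf hfqG hfqH)
        by_contra hc
        have hlt : f q < G q ⊓ H :=
          lt_of_le_of_ne (le_inf hfqG hfqH) (fun h => hc (h ▸ le_refl _))
        have h1 : adim (f q) < adim (G q ⊓ H) := adim_lt_of_lt hlt hfqne
        have h2 : adim (G q ⊓ H) ≤ adim (G q) := adim_mono inf_le_left
        have h3 : G q ⊓ H = G q := by
          refine eq_of_le_of_adim_le inf_le_left ⟨q, le_inf hfqG hfqH hqfq⟩ ?_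
          omega
        have : G q ≤ H := by
          conv_lhs => rw [← h3]
          exact inf_le_right
        exact hpH (this hpG)
      exact ⟨hGCops, hpG, hinf⟩
    refine Finset.card_le_card_of_injOn G ?_ ?_
    · intro q hq
      obtain ⟨h1, h2, _⟩ := key q hq
      exact Finset.mem_filter.2 ⟨h1, h2⟩
    · intro q hq q' hq' hEq
      obtain ⟨_, _, h3⟩ := key q hq
      obtain ⟨_, _, h3'⟩ := key q' hq'
      exact hfinj hq hq' (by rw [← h3, ← h3', hEq])

/-- Basterfield–Kelly inequality: a spanning configuration has at least as many
copoints as points. -/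
lemma bk {k : ℕ} (hk : 1 ≤ k) (IH : ∀ j, 1 ≤ j → j < k → Mstmt E j)
    {S : Finset E} (hdim : adim (sp S) = k) : S.card ≤ (Cops S).card := by
  refine motzkin S (Cops S) (fun p W => p ∈ W) ?_ ?_ ?_ ?_
  · exact fun H hH => Cops_misses hH
  · exact fun p hp => exists_Cops_not_mem (by omega) hp
  · exact fun p hp => exists_Cops_mem (by omega) hp
  · exact fun p hp H hH hpH => incidence hk IH hdim hp hH hpH



/-- Flats of dimension `n` determined by `S`. -/
def Flats (S : Finset E) (n : ℕ) : Finset (AffineSubspace ℝ E) :=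
  ((S.powerset.filter Finset.Nonempty).image (fun T => sp T)).filter (fun W => adim W = n)

lemma mem_Flats {S : Finset E} {n : ℕ} {W : AffineSubspace ℝ E} :
    W ∈ Flats S n ↔ (∃ T, T ⊆ S ∧ T.Nonempty ∧ W = sp T) ∧ adim W = n := by
  unfold Flats
  simp only [Finset.mem_filter, Finset.mem_image, Finset.mem_powerset]
  constructor
  · rintro ⟨⟨T, ⟨hTS, hTne⟩, rfl⟩, h⟩
    exact ⟨⟨T, hTS, hTne, rfl⟩, h⟩
  · rintro ⟨⟨T, hTS, hTne, rfl⟩, h⟩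
    exact ⟨⟨T, ⟨hTS, hTne⟩, rfl⟩, h⟩

lemma sp_union (T T' : Finset E) : sp (T ∪ T') = sp T ⊔ sp T' := by
  unfold sp
  rw [Finset.coe_union, AffineSubspace.span_union]

lemma sp_insert_sup (p : E) (T : Finset E) : sp (insert p T) = sp ({p} : Finset E) ⊔ sp T := by
  rw [← sp_union, ← Finset.insert_eq]

/-- Copoints of a subconfiguration `A` extend injectively to flats of any larger dimension. -/
lemma extend_copoints {S A : Finset E} (hAS : A ⊆ S) (hAne : A.Nonempty) :
    ∀ i : ℕ, adim (sp A) + i ≤ adim (sp S) →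
    ∃ (Q : Finset E) (φ : AffineSubspace ℝ E → AffineSubspace ℝ E), Q ⊆ S ∧
      adim (sp (A ∪ Q)) = adim (sp A) + i ∧
      ∀ W ∈ Cops A, φ W ∈ Flats S (adim W + i) ∧ W ≤ φ W ∧ φ W ⊓ sp A = W ∧
        sp A ⊔ φ W = sp (A ∪ Q) := by
  intro i
  induction i with
  | zero =>
    intro _
    refine ⟨∅, id, Finset.empty_subset _, by simp, ?_⟩
    intro W hW
    obtain ⟨⟨T, hTA, hTne, rfl⟩, _⟩ := mem_Cops.1 hW
    refine ⟨mem_Flats.2 ⟨⟨T, hTA.trans hAS, hTne, rfl⟩, by simp⟩, le_refl _, ?_, ?_⟩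
    · exact inf_eq_left.2 (sp_mono hTA)
    · rw [Finset.union_empty]
      exact sup_eq_left.2 (sp_mono hTA)
  | succ i ih =>
    intro hle
    obtain ⟨Q, φ, hQS, hQdim, hφ⟩ := ih (by omega)
    obtain ⟨q, hqS, hq⟩ := exists_outside (Finset.union_subset hAS hQS) (by omega)
    obtain ⟨x0, hx0⟩ := sp_nonempty hAne
    have hx0' : x0 ∈ sp (A ∪ Q) := sp_mono Finset.subset_union_left hx0
    have hQ'dim : adim (sp (insert q (A ∪ Q))) = adim (sp A) + i + 1 := by
      rw [adim_insert hx0' hq, hQdim]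
    refine ⟨insert q Q, fun W => affineSpan ℝ (insert q ((φ W : AffineSubspace ℝ E) : Set E)),
      Finset.insert_subset hqS hQS, ?_, ?_⟩
    · rw [Finset.union_insert, hQ'dim]
      omega
    intro W hW
    obtain ⟨hWF, hWle, hWinf, hWsup⟩ := hφ W hW
    obtain ⟨⟨T, hTS, hTne, hrep⟩, hWdim⟩ := mem_Flats.1 hWF
    have hrep' : affineSpan ℝ (insert q ((φ W : AffineSubspace ℝ E) : Set E))
        = sp (insert q T) := by rw [hrep, sp_insert_eq]
    have hqφ : q ∉ φ W := fun hc => hq (hWsup ▸ le_sup_right (a := sp A) hc)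
    obtain ⟨y, hy⟩ := sp_nonempty hTne
    have hadφ' : adim (sp (insert q T)) = adim W + i + 1 := by
      rw [adim_insert hy (by rw [← hrep]; exact hqφ), ← hrep, hWdim]
    have hWne : ((W : AffineSubspace ℝ E) : Set E).Nonempty := Cops_nonempty_flat hW
    have hsup' : sp A ⊔ sp (insert q T) = sp (A ∪ insert q Q) := by
      rw [sp_insert_sup q T, Finset.union_insert, sp_insert_sup q (A ∪ Q), ← hWsup, hrep]
      exact sup_left_comm (sp A) (sp ({q} : Finset E)) (sp T)
    beta_reduce
    rw [hrep']
    refine ⟨mem_Flats.2 ⟨⟨insert q T, Finset.insert_subset hqS hTS,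
      Finset.insert_nonempty _ _, rfl⟩, hadφ'⟩, ?_, ?_, hsup'⟩
    · exact hWle.trans (by rw [hrep]; exact sp_mono (Finset.subset_insert _ _))
    · -- the intersection with sp A is still W
      have hWle' : W ≤ sp (insert q T) :=
        hWle.trans (by rw [hrep]; exact sp_mono (Finset.subset_insert _ _))
      have hWleA : W ≤ sp A := Cops_le hW
      refine le_antisymm ?_ (le_inf hWle' hWleA)
      by_contra hc
      have hlt : W < sp (insert q T) ⊓ sp A :=
        lt_of_le_of_ne (le_inf hWle' hWleA) (fun h => hc (h ▸ le_refl _))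
      have h1 : adim W < adim (sp (insert q T) ⊓ sp A) := adim_lt_of_lt hlt hWne
      have hWcop : adim W + 1 = adim (sp A) := (mem_Cops.1 hW).2
      have h2 : sp (insert q T) ⊓ sp A = sp A := by
        refine eq_of_le_of_adim_le inf_le_right ?_ (by omega)
        obtain ⟨z, hz⟩ := hWne
        exact ⟨z, le_inf hWle' hWleA hz⟩
      have h3 : sp A ≤ sp (insert q T) := by
        conv_lhs => rw [← h2]
        exact inf_le_left
      have h4 : sp A ⊔ sp (insert q T) = sp (insert q T) := sup_eq_right.2 h3
      rw [hsup'] at h4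
      have : adim (sp (A ∪ insert q Q)) = adim W + i + 1 := by rw [h4, hadφ']
      rw [Finset.union_insert, hQ'dim] at this
      omega

/-- The Hall condition. -/
lemma hallcond {k : ℕ} (hk : 1 ≤ k) (IH : ∀ j, 1 ≤ j → j < k → Mstmt E j)
    {S : Finset E} (hdim : adim (sp S) = k) {A : Finset E} (hAS : A ⊆ S) :
    A.card ≤ (A.biUnion (fun p => (Cops S).filter (fun W => p ∈ W))).card := by
  rcases A.eq_empty_or_nonempty with rfl | hAne
  · simp
  set j := adim (sp A) with hj
  have hjk : j ≤ k := hdim ▸ adim_mono (sp_mono hAS)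
  rcases Nat.eq_zero_or_pos j with hj0 | hj1
  · -- all points of A coincide
    obtain ⟨a, ha⟩ := hAne
    have h0 : adim (sp A) = 0 := by rw [← hj]; exact hj0
    have hcard : A.card ≤ 1 := Finset.card_le_one.2 fun b hb c hc =>
      eq_of_adim_eq_zero h0 (mem_sp hb) (mem_sp hc)
    obtain ⟨W, hW, haW⟩ := exists_Cops_mem (by omega) (hAS ha)
    have : 1 ≤ (A.biUnion (fun p => (Cops S).filter (fun W => p ∈ W))).card :=
      Finset.card_pos.2 ⟨W, Finset.mem_biUnion.2 ⟨a, ha, Finset.mem_filter.2 ⟨hW, haW⟩⟩⟩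
    omega
  · -- A has dimension j ≥ 1 : apply BK to the subconfiguration A, then extend
    have hbkA : A.card ≤ (Cops A).card :=
      bk hj1 (fun i h1 h2 => IH i h1 (lt_of_lt_of_le h2 hjk)) (hj.symm)
    obtain ⟨Q, φ, hQS, hQdim, hφ⟩ := extend_copoints hAS hAne (k - j) (by omega)
    have himg : ∀ W ∈ Cops A,
        φ W ∈ A.biUnion (fun p => (Cops S).filter (fun W => p ∈ W)) := by
      intro W hW
      obtain ⟨hWF, hWle, _, _⟩ := hφ W hW
      obtain ⟨⟨T, hTS, hTne, hrep⟩, hWdim⟩ := mem_Flats.1 hWF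
      have hWcop : adim W + 1 = j := (mem_Cops.1 hW).2
      have hφCops : φ W ∈ Cops S := by
        refine mem_Cops.2 ⟨⟨T, hTS, hTne, hrep⟩, ?_⟩
        rw [hWdim, hdim]
        omega
      obtain ⟨a, haA, haW⟩ := Cops_exists_mem hW
      exact Finset.mem_biUnion.2 ⟨a, haA, Finset.mem_filter.2 ⟨hφCops, hWle haW⟩⟩
    calc A.card ≤ (Cops A).card := hbkA
      _ ≤ _ := by
          refine Finset.card_le_card_of_injOn φ himg ?_
          intro W hW W' hW' hEq
          obtain ⟨_, _, h3, _⟩ := hφ W hW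
          obtain ⟨_, _, h3', _⟩ := hφ W' hW'
          rw [← h3, ← h3', hEq]

lemma hall_aux {α : Type*} {β : Type*} [DecidableEq β] (S : Finset α)
    (t : {x // x ∈ S} → Finset β)
    (hcond : ∀ s : Finset {x // x ∈ S}, s.card ≤ (s.biUnion t).card) :
    ∃ f : {x // x ∈ S} → β, Function.Injective f ∧ ∀ x, f x ∈ t x :=
  (Finset.all_card_le_biUnion_card_iff_exists_injective t).1 hcond

/-- Greene's matching theorem, by strong induction on the dimension. -/
theorem matching_thm : ∀ k : ℕ, 1 ≤ k → Mstmt E k := by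
  intro k
  induction k using Nat.strong_induction_on with
  | _ k IH =>
    intro hk S hSne hdim
    have hcond : ∀ s : Finset {x // x ∈ S},
        s.card ≤ (s.biUnion (fun x => (Cops S).filter (fun W => ↑x ∈ W))).card := by
      intro s
      set A := s.image (Subtype.val) with hA
      have hAS : A ⊆ S := by
        intro a ha
        obtain ⟨x, _, rfl⟩ := Finset.mem_image.1 ha
        exact x.2
      have hcard : A.card = s.card := Finset.card_image_of_injective s Subtype.val_injective
      have hbi : s.biUnion (fun x => (Cops S).filter (fun W => ↑x ∈ W)) =
          A.biUnion (fun p => (Cops S).filter (fun W => p ∈ W)) := by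
        ext W
        simp only [Finset.mem_biUnion, Finset.mem_image, hA]
        constructor
        · rintro ⟨x, hx, h⟩
          exact ⟨↑x, ⟨x, hx, rfl⟩, h⟩
        · rintro ⟨p, ⟨x, hx, rfl⟩, h⟩
          exact ⟨x, hx, h⟩
      rw [hbi, ← hcard]
      exact hallcond hk (fun j h1 h2 => IH j h2 h1) hdim hAS
    obtain ⟨f, hfinj, hfmem⟩ := hall_aux S _ hcond
    refine ⟨fun p => if h : p ∈ S then f ⟨p, h⟩ else ⊥, ?_, ?_⟩
    · intro p hp q hq hEq
      rw [Finset.mem_coe] at hp hq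
      beta_reduce at hEq
      rw [dif_pos hp, dif_pos hq] at hEq
      exact congrArg Subtype.val (hfinj hEq)
    · intro p hp
      beta_reduce
      rw [dif_pos hp]
      have := hfmem ⟨p, hp⟩
      exact ⟨(Finset.mem_filter.1 this).1, (Finset.mem_filter.1 this).2⟩

end Greene
end



/-- `W` is a flat determined by the points `P 0, …, P (n-1)`: a nonempty affine subspace
that equals the affine span of the set of points `P i` lying in `W`. -/
def IsFlatOf {n d : ℕ} (P : Fin n → (Fin d → ℝ)) (W : AffineSubspace ℝ (Fin d → ℝ)) : Prop :=
  (W : Set (Fin d → ℝ)).Nonempty ∧ W = affineSpan ℝ (Set.range P ∩ (W : Set (Fin d → ℝ)))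

/-- The rank of a flat: its dimension plus one. -/
noncomputable def flatRank {d : ℕ} (W : AffineSubspace ℝ (Fin d → ℝ)) : ℕ :=
  Module.finrank ℝ W.direction + 1

/-- Greene: the points can be injectively matched to hyperplanes they determine,
each point lying on its assigned hyperplane. -/
theorem greene_points_to_hyperplanes {n d : ℕ} (hd : 1 ≤ d) (P : Fin n → (Fin d → ℝ))
    (hspan : affineSpan ℝ (Set.range P) = ⊤) :
    ∃ ι : {W : AffineSubspace ℝ (Fin d → ℝ) // IsFlatOf P W ∧ flatRank W = 1} →
          {W : AffineSubspace ℝ (Fin d → ℝ) // IsFlatOf P W ∧ flatRank W = d},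
      Function.Injective ι ∧ ∀ F, F.1 ≤ (ι F).1 := by
  classical
  set S : Finset (Fin d → ℝ) := Finset.image P Finset.univ with hS
  have hScoe : (S : Set (Fin d → ℝ)) = Set.range P := by
    rw [hS, Finset.coe_image, Finset.coe_univ, Set.image_univ]
  have hspS : Greene.sp S = ⊤ := by
    unfold Greene.sp
    rw [hScoe, hspan]
  have hadim : Greene.adim (Greene.sp S) = d := by
    unfold Greene.adim
    rw [hspS, AffineSubspace.direction_top]
    rw [finrank_top, Module.finrank_fintype_fun_eq_card, Fintype.card_fin]
  have hSne : S.Nonempty := by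
    by_contra hc
    rw [Finset.not_nonempty_iff_eq_empty] at hc
    rw [hc] at hspS
    simp only [Greene.sp, Finset.coe_empty, AffineSubspace.span_empty] at hspS
    have h0 : (0 : Fin d → ℝ) ∈ (⊤ : AffineSubspace ℝ (Fin d → ℝ)) := trivial
    rw [← hspS] at h0
    exact AffineSubspace.notMem_bot ℝ (Fin d → ℝ) 0 h0
  obtain ⟨f, hfinj, hf⟩ := Greene.matching_thm (E := Fin d → ℝ) d hd S hSne hadim
  -- every rank-1 flat is a singleton at a point of S
  have hpt : ∀ W : AffineSubspace ℝ (Fin d → ℝ), IsFlatOf P W → flatRank W = 1 →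
      ∃ a, a ∈ S ∧ (W : Set (Fin d → ℝ)) = {a} := by
    intro W hWf hWr
    obtain ⟨x, hx⟩ := hWf.1
    have hdir : W.direction = ⊥ := by
      have : Module.finrank ℝ W.direction = 0 := by
        unfold flatRank at hWr
        omega
      exact Submodule.finrank_eq_zero.1 this
    have hsingle : (W : Set (Fin d → ℝ)) = {x} := by
      ext y
      constructor
      · intro hy
        have : y -ᵥ x ∈ W.direction := AffineSubspace.vsub_mem_direction hy hx
        rw [hdir, Submodule.mem_bot] at this
        simpa [sub_eq_zero] using this
      · rintro rfl
        exact hx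
    have hxS : x ∈ S := by
      have hWeq := hWf.2
      have hne : (Set.range P ∩ (W : Set (Fin d → ℝ))).Nonempty := by
        by_contra hc
        rw [Set.not_nonempty_iff_eq_empty] at hc
        rw [hc, AffineSubspace.span_empty] at hWeq
        obtain ⟨z, hz⟩ := hWf.1
        rw [hWeq] at hz
        simp at hz
      obtain ⟨a, haP, haW⟩ := hne
      rw [hsingle] at haW
      rw [Set.mem_singleton_iff] at haW
      rw [← hScoe] at haP
      rw [Finset.mem_coe] at haP
      exact haW ▸ haP
    exact ⟨x, hxS, hsingle⟩
  set pt : {W : AffineSubspace ℝ (Fin d → ℝ) // IsFlatOf P W ∧ flatRank W = 1} → (Fin d → ℝ) :=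
    fun F => (hpt F.1 F.2.1 F.2.2).choose with hptdef
  have hptS : ∀ F, pt F ∈ S := fun F => (hpt F.1 F.2.1 F.2.2).choose_spec.1
  have hptW : ∀ F, (F.1 : Set (Fin d → ℝ)) = {pt F} := fun F => (hpt F.1 F.2.1 F.2.2).choose_spec.2
  -- the image copoints are genuine flats of rank d
  have himg : ∀ F, IsFlatOf P (f (pt F)) ∧ flatRank (f (pt F)) = d := by
    intro F
    obtain ⟨hC, hmem⟩ := hf (pt F) (hptS F)
    obtain ⟨⟨T, hTS, hTne, hrep⟩, hdimW⟩ := Greene.mem_Cops.1 hC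
    constructor
    · constructor
      · rw [hrep]
        exact Greene.sp_nonempty hTne
      · refine le_antisymm ?_ (affineSpan_le.2 Set.inter_subset_right)
        have hTsub : (T : Set (Fin d → ℝ)) ⊆ Set.range P ∩ (f (pt F) : Set (Fin d → ℝ)) := by
          intro t ht
          refine ⟨?_, ?_⟩
          · rw [← hScoe]
            exact_mod_cast hTS (by exact_mod_cast ht)
          · rw [hrep]
            exact Greene.mem_sp (by exact_mod_cast ht)
        calc f (pt F) = Greene.sp T := hrep
          _ ≤ _ := affineSpan_mono ℝ hTsub
    · have h1 : Greene.adim (f (pt F)) + 1 = d := hdimW.trans hadim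
      unfold flatRank
      exact h1
  refine ⟨fun F => ⟨f (pt F), himg F⟩, ?_, ?_⟩
  · intro F F' hEq
    have h1 : f (pt F) = f (pt F') := congrArg Subtype.val hEq
    have h2 : pt F = pt F' := hfinj (Finset.mem_coe.2 (hptS F)) (Finset.mem_coe.2 (hptS F')) h1
    have h3 : (F.1 : Set (Fin d → ℝ)) = (F'.1 : Set (Fin d → ℝ)) := by rw [hptW F, hptW F', h2]
    exact Subtype.ext (SetLike.coe_injective h3)
  · intro F
    intro x hx
    have : x = pt F := by
      have := hptW F
      rw [Set.ext_iff] at this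
      exact (this x).1 hx
    rw [this]
    exact (hf (pt F) (hptS F)).2
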